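/- Size bound for taint-based SIC inference: define terms over a signature with maximal arity N inductively (variables, constants, and function applications f t₁ … tₖ with k ≤ N), with size(variable) = size(constant) = 1 and size(f t₁ … tₖ) = 1 + Σᵢ size(tᵢ). Suppose inferSIC is defined recursively by: inferSIC(constant) = ⊤, inferSIC(variable) a formula of size 1, and inferSIC(f t₁ … tₖ) = θ ∨ (inferSIC(t₁) ∧ ⋯ ∧ inferSIC(tₖ)) where θ = theorySIC(...) has size ≤ K, and where the disjunction/conjunction structure contributes 1 + (k−1) + 1 ≤ k + 1 connective nodes. Then for every term Φ, size(inferSIC(Φ)) ≤ (K + N) · size(Φ). -/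
import Mathlib


/-- Terms over a signature `F`: variables, constants and function applications. -/
inductive Term (F : Type) : Type where
  | var : Term F
  | const : Term F
  | app : F → List (Term F) → Term F

/-- Output formulas, with enough structure to measure sizes. -/
inductive Formula (F : Type) : Type where
  | top : Formula F
  | bot : Formula F
  | atom : F → Formula F
  | and : Formula F → Formula F → Formula F
  | or : Formula F → Formula F → Formula F

namespace Formula

def size {F : Type} : Formula F → ℕ
  | .top => 1
  | .bot => 1
  | .atom _ => 1
  | .and a b => 1 + a.size + b.size
  | .or a b => 1 + a.size + b.size

end Formula

namespace Term

mutual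
  /-- Size of a term. -/
  def size {F : Type} : Term F → ℕ
    | .var => 1
    | .const => 1
    | .app _ ts => 1 + sizeList ts
  def sizeList {F : Type} : List (Term F) → ℕ
    | [] => 0
    | t :: ts => size t + sizeList ts
end

mutual
  /-- All function applications in the term have arity at most `N`. -/
  def bounded {F : Type} (N : ℕ) : Term F → Prop
    | .var => True
    | .const => True
    | .app _ ts => ts.length ≤ N ∧ boundedList N ts
  def boundedList {F : Type} (N : ℕ) : List (Term F) → Prop
    | [] => True
    | t :: ts => bounded N t ∧ boundedList N ts
end

mutual
  /-- Taint-based SIC inference: `θ ∨ (ψ₁ ∧ ⋯ ∧ ψₖ)` at each application node,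
      where `θ` is provided by the theory-dependent procedure `th`. -/
  def inferSIC {F : Type} (th : F → List (Term F) → Formula F) : Term F → Formula F
    | .var => .bot -- a formula of size 1 (the condition "v ∉ x")
    | .const => .top
    | .app f ts => .or (th f ts) (conjList th ts)
  def conjList {F : Type} (th : F → List (Term F) → Formula F) :
      List (Term F) → Formula F
    | [] => .top
    | [t] => inferSIC th t
    | t :: ts => .and (inferSIC th t) (conjList th ts)
end

end Term

namespace Term

lemma size_pos {F : Type} : ∀ t : Term F, 1 ≤ t.size
  | .var => le_refl _
  | .const => le_refl _
  | .app _ _ => by simp [size]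

lemma size_mem_le {F : Type} : ∀ (ts : List (Term F)) (t : Term F),
    t ∈ ts → t.size ≤ sizeList ts
  | [], t, h => by simp at h
  | a :: as, t, h => by
    rcases List.mem_cons.mp h with h | h
    · subst h; simp [sizeList]
    · have := size_mem_le as t h
      simp [sizeList]; omega

lemma bounded_mem {F : Type} {N : ℕ} : ∀ (ts : List (Term F)),
    boundedList N ts → ∀ t ∈ ts, bounded N t
  | [], _, t, h => by simp at h
  | a :: as, hb, t, h => by
    rcases hb with ⟨ha, has⟩
    rcases List.mem_cons.mp h with h | h
    · subst h; exact ha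
    · exact bounded_mem as has t h

section

variable {F : Type} (th : F → List (Term F) → Formula F) (K N : ℕ)

lemma conj_bound
    (ts : List (Term F)) (hne : ts ≠ [])
    (H : ∀ t ∈ ts, (inferSIC th t).size + (N - 2) ≤ (K + N) * t.size) :
    (conjList th ts).size + ts.length * (N - 2) + 1 ≤
      (K + N) * sizeList ts + ts.length := by
  induction ts with
  | nil => exact absurd rfl hne
  | cons a as ih =>
    have ha := H a (by simp)
    cases as with
    | nil =>
      simp only [conjList, sizeList, List.length, Nat.add_zero, Nat.one_mul]
      omega
    | cons b bs =>
      have ihs := ih (by simp) (fun t ht => H t (List.mem_cons_of_mem _ ht))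
      simp only [conjList, Formula.size, sizeList, List.length] at *
      have hm : (b :: bs).length * (N - 2) + (N - 2)
          = (b :: bs).length * (N - 2) + (N - 2) := rfl
      -- (k+1)*(N-2) = k*(N-2) + (N-2)
      have : ((b :: bs).length + 1) * (N - 2)
          = (b :: bs).length * (N - 2) + (N - 2) := by ring
      simp only [List.length] at *
      nlinarith [ha, ihs]

lemma key (hK : ∀ (f : F) (ts : List (Term F)), (th f ts).size ≤ K) (hN : 2 ≤ N) :
    ∀ n (t : Term F), t.size ≤ n → bounded N t →
      (inferSIC th t).size + (N - 2) ≤ (K + N) * t.size := by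
  obtain ⟨M, rfl⟩ : ∃ M, N = M + 2 := ⟨N - 2, by omega⟩
  simp only [Nat.add_sub_cancel]
  intro n
  induction n with
  | zero => intro t ht; have := size_pos t; omega
  | succ n ih =>
    intro t ht hb
    match t with
    | .var =>
      simp only [inferSIC, Formula.size, size]
      nlinarith
    | .const =>
      simp only [inferSIC, Formula.size, size]
      nlinarith
    | .app f ts =>
      rcases hb with ⟨hlen, hbl⟩
      have hsz : size (Term.app f ts) = 1 + sizeList ts := rfl
      have hth := hK f ts
      have Helem : ∀ t' ∈ ts, (inferSIC th t').size + M ≤ (K + (M + 2)) * t'.size := by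
        intro t' ht'
        apply ih
        · have := size_mem_le ts t' ht'
          omega
        · exact bounded_mem ts hbl t' ht'
      cases ts with
      | nil =>
        simp only [inferSIC, conjList, Formula.size, size, sizeList]
        omega
      | cons a as =>
        have hconj := conj_bound th K (M + 2) (a :: as) (by simp)
          (by simpa using Helem)
        simp only [Nat.add_sub_cancel] at hconj
        have hk3 : 3 * (a :: as).length ≤ (a :: as).length * (M + 2) + 2 := by
          have hpos : 0 < (a :: as).length := by simp
          rcases Nat.eq_zero_or_pos M with hM | hM
          · subst hM; simp at hlen ⊢; omega
          · nlinarith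
        simp only [inferSIC, Formula.size, size] at *
        set k := (a :: as).length with hkdef
        set s := sizeList (a :: as) with hsdef
        -- goal: 1 + th.size + conj.size + M ≤ (K+M+2)*(1+s)
        nlinarith [hconj, hth, hk3]

end

end Term

/-- Proposition 5 (Size bound): taint-based SIC inference has linear size overhead. -/
theorem inferSIC_size_bound {F : Type}
    (th : F → List (Term F) → Formula F) (K N : ℕ)
    (hK : ∀ (f : F) (ts : List (Term F)), (th f ts).size ≤ K)
    (hN : 2 ≤ N) :
    ∀ Φ : Term F, Φ.bounded N → (Term.inferSIC th Φ).size ≤ (K + N) * Φ.size := by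
  intro Φ hb
  have := Term.key th K N hK hN Φ.size Φ le_rfl hb
  omega
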